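/- Violation preservation: if an interleaving of program P violates an assertion a at an edge (u,a,v) taken by thread t, then the ghost-instrumented interleaving π_ghost(i) of the witness-instrumented program P_W violates the same assertion a at the edge δ_W(u,a,v) taken by t. Consequently, if the ghost witness W is valid (P_W is safe w.r.t. interleaving semantics) then P is safe. -/

import Mathlib

namespace CW

/-- Thread ids are finite sequences of naturals (creation histories). -/
abbrev TID := List Nat

/-- Actions of the core language `Lang`. -/
inductive Act (Mutex Global L V : Type) : Type where
  | lock (m : Mutex)
  | unlock (m : Mutex)
  | create (tmpl : Nat)
  | localUpd (f : L → L)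
  | read (g : Global) (f : L → V → L)
  | write (g : Global) (f : L → V)
  | assert (p : L → Bool)
  | pos (c : L → Bool)
  | neg (c : L → Bool)

/-- A program: thread templates (numbered CFGs, template 0 is `main`),
    start nodes, initial local state and initial values of globals. -/
structure Prog (Node Mutex Global L V : Type) where
  edges : Nat → Node → Act Mutex Global L V → Node → Prop
  start : Nat → Node
  initLocal : L
  initGlobal : Global → V

/-- A configuration `(L, M, G)`: thread map (template, node, local state, create counter),
    mutex ownership map, and values of globals. -/
structure Config (Node Mutex Global L V : Type) where
  threads : TID → Option (Nat × Node × L × Nat)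
  mutexes : Mutex → Option TID
  globals : Global → V

variable {Node Mutex Global L V : Type}

/-- The canonical initial configuration. -/
def initConfig (P : Prog Node Mutex Global L V) : Config Node Mutex Global L V where
  threads := fun t => if t = ([] : TID) then some (0, P.start 0, P.initLocal, 0) else none
  mutexes := fun _ => none
  globals := P.initGlobal

/-- The initial-state condition: only the initial thread exists, at the start node of main
    with the initial local state, no mutex held, globals at declared initial values. -/
def IsInitGen (startF : Nat → Node) (l0 : L) (g0 : Global → V)
    (c : Config Node Mutex Global L V) : Prop :=
  (∀ t : TID, c.threads t = if t = ([] : TID) then some (0, startF 0, l0, 0) else none) ∧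
  (∀ m, c.mutexes m = none) ∧ (∀ g, c.globals g = g0 g)

def IsInit (P : Prog Node Mutex Global L V) (c : Config Node Mutex Global L V) : Prop :=
  IsInitGen P.start P.initLocal P.initGlobal c

/-- Admissibility of an action for a thread with local state `l` and create counter `cnt`. -/
def admissibleAct (c : Config Node Mutex Global L V) (t : TID) (l : L) (cnt : Nat) :
    Act Mutex Global L V → Prop
  | .lock m => c.mutexes m = none
  | .unlock m => c.mutexes m = some t
  | .create _ => c.threads (t ++ [cnt]) = none
  | .pos p => p l = true
  | .neg p => p l = false
  | _ => True

variable [DecidableEq Mutex] [DecidableEq Global]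

/-- The effect of action `a` taken by thread `t` moving to node `v`. -/
def applyAct (startF : Nat → Node) (l0 : L) (c : Config Node Mutex Global L V)
    (t : TID) (tmpl : Nat) (v : Node) (l : L) (cnt : Nat) :
    Act Mutex Global L V → Config Node Mutex Global L V
  | .lock m =>
      { threads := Function.update c.threads t (some (tmpl, v, l, cnt)),
        mutexes := Function.update c.mutexes m (some t),
        globals := c.globals }
  | .unlock m =>
      { threads := Function.update c.threads t (some (tmpl, v, l, cnt)),
        mutexes := Function.update c.mutexes m none,
        globals := c.globals }
  | .create k =>
      { threads := Function.update
          (Function.update c.threads t (some (tmpl, v, l, cnt + 1)))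
          (t ++ [cnt]) (some (k, startF k, l0, 0)),
        mutexes := c.mutexes, globals := c.globals }
  | .localUpd f =>
      { threads := Function.update c.threads t (some (tmpl, v, f l, cnt)),
        mutexes := c.mutexes, globals := c.globals }
  | .read g f =>
      { threads := Function.update c.threads t (some (tmpl, v, f l (c.globals g), cnt)),
        mutexes := c.mutexes, globals := c.globals }
  | .write g f =>
      { threads := Function.update c.threads t (some (tmpl, v, l, cnt)),
        mutexes := c.mutexes,
        globals := Function.update c.globals g (f l) }
  | _ =>
      { threads := Function.update c.threads t (some (tmpl, v, l, cnt)),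
        mutexes := c.mutexes, globals := c.globals }

/-- One consistent step of the interleaving semantics. -/
def Step (P : Prog Node Mutex Global L V) (c : Config Node Mutex Global L V) (t : TID)
    (e : Node × Act Mutex Global L V × Node) (c' : Config Node Mutex Global L V) : Prop :=
  ∃ tmpl l cnt, c.threads t = some (tmpl, e.1, l, cnt) ∧
    P.edges tmpl e.1 e.2.1 e.2.2 ∧
    admissibleAct c t l cnt e.2.1 ∧
    c' = applyAct P.start P.initLocal c t tmpl e.2.2 l cnt e.2.1

/-- A consistent interleaving of `P`: a sequence of configurations connected by
    admissible thread-labeled steps, starting in the initial state. -/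
structure Interleaving (P : Prog Node Mutex Global L V) where
  len : Nat
  states : Fin (len + 1) → Config Node Mutex Global L V
  who : Fin len → TID
  edge : Fin len → Node × Act Mutex Global L V × Node
  init : IsInit P (states 0)
  consistent : ∀ k : Fin len, Step P (states k.castSucc) (who k) (edge k) (states k.succ)

/-- The assertion at step `k` of interleaving `i` is violated. -/
def Interleaving.ViolatesAt {P : Prog Node Mutex Global L V} (i : Interleaving P)
    (k : Fin i.len) : Prop :=
  ∃ p u v, i.edge k = (u, Act.assert p, v) ∧
    ∃ tmpl l cnt, (i.states k.castSucc).threads (i.who k) = some (tmpl, u, l, cnt) ∧ p l = false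

/-- Safety w.r.t. the interleaving semantics. -/
def Safe (P : Prog Node Mutex Global L V) : Prop :=
  ∀ (i : Interleaving P) (k : Fin i.len), ¬ i.ViolatesAt k

/-- Actions of `Lang_Atomic`: base actions, and atomic blocks `atomic{a; rest}` whose
first statement `a` is the only possibly inadmissible one. -/
inductive ActA (Mutex Global L V : Type) : Type where
  | base (a : Act Mutex Global L V)
  | atomic (a : Act Mutex Global L V) (rest : List (Act Mutex Global L V))

/-- Programs of `Lang_Atomic`. -/
structure ProgA (Node Mutex Global L V : Type) where
  edges : Nat → Node → ActA Mutex Global L V → Node → Prop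
  start : Nat → Node
  initLocal : L
  initGlobal : Global → V

/-- Always-admissible statement kinds allowed inside the tail of an atomic block. -/
def Act.Simple : Act Mutex Global L V → Prop
  | .localUpd _ => True
  | .read _ _ => True
  | .write _ _ => True
  | .assert _ => True
  | _ => False

/-- Apply one action of a thread `t` (keeping it at node `v`). -/
def applyOne (startF : Nat → Node) (l0 : L) (c : Config Node Mutex Global L V)
    (t : TID) (v : Node) (a : Act Mutex Global L V) : Config Node Mutex Global L V :=
  match c.threads t with
  | some (tmpl, _, l, cnt) => applyAct startF l0 c t tmpl v l cnt a
  | none => c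

/-- Apply a sequence of actions of thread `t` in one atomic step. -/
def applyList (startF : Nat → Node) (l0 : L) (c : Config Node Mutex Global L V)
    (t : TID) (v : Node) (as_ : List (Act Mutex Global L V)) : Config Node Mutex Global L V :=
  as_.foldl (fun c a => applyOne startF l0 c t v a) c

/-- One step of the interleaving semantics of `Lang_Atomic`; an atomic block is executed
as a whole, and is admissible iff its first statement is. -/
def StepA (P : ProgA Node Mutex Global L V) (c : Config Node Mutex Global L V) (t : TID)
    (e : Node × ActA Mutex Global L V × Node) (c' : Config Node Mutex Global L V) : Prop :=
  ∃ tmpl l cnt, c.threads t = some (tmpl, e.1, l, cnt) ∧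
    P.edges tmpl e.1 e.2.1 e.2.2 ∧
    match e.2.1 with
    | .base a => admissibleAct c t l cnt a ∧
        c' = applyAct P.start P.initLocal c t tmpl e.2.2 l cnt a
    | .atomic a rest => admissibleAct c t l cnt a ∧ (∀ b ∈ rest, b.Simple) ∧
        c' = applyList P.start P.initLocal
              (applyAct P.start P.initLocal c t tmpl e.2.2 l cnt a) t e.2.2 rest

/-- A consistent interleaving of a `Lang_Atomic` program. -/
structure InterleavingA (P : ProgA Node Mutex Global L V) where
  len : Nat
  states : Fin (len + 1) → Config Node Mutex Global L V
  who : Fin len → TID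
  edge : Fin len → Node × ActA Mutex Global L V × Node
  init : IsInitGen P.start P.initLocal P.initGlobal (states 0)
  consistent : ∀ k : Fin len, StepA P (states k.castSucc) (who k) (edge k) (states k.succ)

/-- An assertion (possibly inside an atomic block) is violated at step `k`: it evaluates to
false after executing the preceding statements of the block on the preceding state. -/
def InterleavingA.ViolatesAt {P : ProgA Node Mutex Global L V} (i : InterleavingA P)
    (k : Fin i.len) : Prop :=
  ∃ tmpl l cnt,
    (i.states k.castSucc).threads (i.who k) = some (tmpl, (i.edge k).1, l, cnt) ∧
    match (i.edge k).2.1 with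
    | .base a => ∃ p, a = Act.assert p ∧ p l = false
    | .atomic a rest =>
        (∃ p, a = Act.assert p ∧ p l = false) ∨
        ∃ n p, rest[n]? = some (Act.assert p) ∧
          ∃ tmpl' nd l' cnt',
            ((applyList P.start P.initLocal
                (applyAct P.start P.initLocal (i.states k.castSucc) (i.who k) tmpl
                  (i.edge k).2.2 l cnt a)
                (i.who k) (i.edge k).2.2 (rest.take n)).threads (i.who k))
              = some (tmpl', nd, l', cnt') ∧ p l' = false

/-- Safety of a `Lang_Atomic` program w.r.t. the interleaving semantics. -/
def SafeA (P : ProgA Node Mutex Global L V) : Prop :=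
  ∀ (i : InterleavingA P) (k : Fin i.len), ¬ i.ViolatesAt k

variable {GGlobal GLoc : Type} [DecidableEq GGlobal]

/-- Ghost updates: statements over the extended state that only write ghost locals and
ghost globals (reading program and ghost state is allowed). -/
def GhostUpd : Act Mutex (Global ⊕ GGlobal) (L × GLoc) V → Prop
  | .localUpd f => ∀ p, (f p).1 = p.1
  | .read _ f => ∀ p v, (f p v).1 = p.1
  | .write g _ => ∃ gg, g = Sum.inr gg
  | _ => False

/-- Ghost statements used to evaluate and assert invariants: ghost updates or asserts. -/
def GhostStmt (b : Act Mutex (Global ⊕ GGlobal) (L × GLoc) V) : Prop :=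
  GhostUpd b ∨ ∃ p, b = Act.assert p

/-- A ghost witness `(D_g, X_g, U, I)` for `P`: initial values of fresh ghost globals,
initial ghost local state, ghost updates per edge, and location invariants per node
(given as ghost statement sequences evaluating and asserting the invariant). -/
structure Witness (P : Prog Node Mutex Global L V) (GGlobal GLoc : Type) where
  ginit : GGlobal → V
  glinit : GLoc
  upd : Nat → Node → Node → Option (List (Act Mutex (Global ⊕ GGlobal) (L × GLoc) V))
  inv : Node → Option (List (Act Mutex (Global ⊕ GGlobal) (L × GLoc) V))

/-- Well-formedness: ghost updates only modify ghost variables; invariant code consists of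
ghost statements. -/
def Witness.WF {P : Prog Node Mutex Global L V} (W : Witness P GGlobal GLoc) : Prop :=
  (∀ tmpl u v us, W.upd tmpl u v = some us → ∀ b ∈ us, GhostUpd (GLoc := GLoc) b) ∧
  (∀ u bs, W.inv u = some bs → ∀ b ∈ bs, GhostStmt (GLoc := GLoc) b)

/-- Lift a program action to the extended (ghost-instrumented) state spaces. -/
def liftAct : Act Mutex Global L V → Act Mutex (Global ⊕ GGlobal) (L × GLoc) V
  | .lock m => .lock m
  | .unlock m => .unlock m
  | .create k => .create k
  | .localUpd f => .localUpd (fun p => (f p.1, p.2))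
  | .read g f => .read (.inl g) (fun p v => (f p.1 v, p.2))
  | .write g f => .write (.inl g) (fun p => f p.1)
  | .assert p => .assert (fun q => p q.1)
  | .pos c => .pos (fun q => c q.1)
  | .neg c => .neg (fun q => c q.1)

/-- The atomic block evaluating and asserting an invariant. -/
def invAct : List (Act Mutex (Global ⊕ GGlobal) (L × GLoc) V) →
    ActA Mutex (Global ⊕ GGlobal) (L × GLoc) V
  | [] => .atomic (.localUpd id) []
  | b :: bs => .atomic b bs

/-- `δ_W`: the instrumented action on an edge — the original action fused atomically with
the ghost updates, if any. -/
def deltaAct {P : Prog Node Mutex Global L V} (W : Witness P GGlobal GLoc)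
    (tmpl : Nat) (u v : Node) (a : Act Mutex Global L V) :
    ActA Mutex (Global ⊕ GGlobal) (L × GLoc) V :=
  match W.upd tmpl u v with
  | some us => .atomic (liftAct a) us
  | none => .base (liftAct a)

/-- Source node of the instrumented edge: the new node `(u, v)` if `Ψ_W u` is defined. -/
def srcNode {P : Prog Node Mutex Global L V} (W : Witness P GGlobal GLoc)
    (u v : Node) : Node ⊕ (Node × Node) :=
  if (W.inv u).isSome then .inr (u, v) else .inl u

/-- The witness-instrumented program `P_W`. -/
def instrument (P : Prog Node Mutex Global L V) (W : Witness P GGlobal GLoc) :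
    ProgA (Node ⊕ (Node × Node)) Mutex (Global ⊕ GGlobal) (L × GLoc) V where
  edges := fun tmpl n act n' =>
    (∃ u a v, P.edges tmpl u a v ∧ n = srcNode W u v ∧
        act = deltaAct W tmpl u v a ∧ n' = .inl v) ∨
    (∃ u a v bs, P.edges tmpl u a v ∧ W.inv u = some bs ∧
        n = .inl u ∧ act = invAct bs ∧ n' = .inr (u, v))
  start := fun k => .inl (P.start k)
  initLocal := (P.initLocal, W.glinit)
  initGlobal := Sum.elim P.initGlobal W.ginit

/-- Project an instrumented node back to the original node. -/
def projNode : Node ⊕ (Node × Node) → Node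
  | .inl u => u
  | .inr p => p.1

/-- `π_P`: project a configuration of `P_W` back to a configuration of `P` (remove ghost
variables; keep program variables, mutexes and thread locations). -/
def projConfig (c : Config (Node ⊕ (Node × Node)) Mutex (Global ⊕ GGlobal) (L × GLoc) V) :
    Config Node Mutex Global L V where
  threads := fun t => (c.threads t).map (fun e => (e.1, projNode e.2.1, e.2.2.1.1, e.2.2.2))
  mutexes := c.mutexes
  globals := fun g => c.globals (.inl g)

/-- A step of an instrumented interleaving is an inserted invariant-assertion step. -/
def IsInvStep {P : Prog Node Mutex Global L V} (W : Witness P GGlobal GLoc)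
    (e : (Node ⊕ (Node × Node)) × ActA Mutex (Global ⊕ GGlobal) (L × GLoc) V ×
          (Node ⊕ (Node × Node))) : Prop :=
  ∃ u v bs, W.inv u = some bs ∧ e = (.inl u, invAct bs, .inr (u, v))

/-! ### Auxiliary development for violation preservation -/

section Aux

/-- Relation between a thread entry of `P` and of `P_W`: same template, counter and
program-local state, node lifted via `inl`. -/
def ORel : Option (Nat × Node × L × Nat) →
    Option (Nat × (Node ⊕ (Node × Node)) × (L × GLoc) × Nat) → Prop
  | none, none => True
  | some (tmpl, nd, l, cnt), some (tmpl', nd', l', cnt') =>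
      tmpl' = tmpl ∧ nd' = Sum.inl nd ∧ l'.1 = l ∧ cnt' = cnt
  | _, _ => False

lemma ORel_none {y : Option (Nat × (Node ⊕ (Node × Node)) × (L × GLoc) × Nat)}
    (h : ORel (Node := Node) (L := L) none y) : y = none := by
  cases y with
  | none => rfl
  | some q => exact h.elim

lemma ORel_some {tmpl : Nat} {nd : Node} {l : L} {cnt : Nat}
    {y : Option (Nat × (Node ⊕ (Node × Node)) × (L × GLoc) × Nat)}
    (h : ORel (some (tmpl, nd, l, cnt)) y) :
    ∃ gl, y = some (tmpl, Sum.inl nd, (l, gl), cnt) := by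
  cases y with
  | none => exact h.elim
  | some q =>
    obtain ⟨t', n', l', c'⟩ := q
    obtain ⟨h1, h2, h3, h4⟩ := h
    subst h1; subst h2; subst h4
    exact ⟨l'.2, by rw [← h3]⟩

lemma ORel_mk {tmpl : Nat} {nd : Node} {l : L} {cnt : Nat} {gl : GLoc} :
    ORel (some (tmpl, nd, l, cnt)) (some (tmpl, Sum.inl nd, (l, gl), cnt)) :=
  ⟨rfl, rfl, rfl, rfl⟩

/-- Relation between a configuration of `P` and a configuration of `P_W`. -/
def Rel (c : Config Node Mutex Global L V)
    (d : Config (Node ⊕ (Node × Node)) Mutex (Global ⊕ GGlobal) (L × GLoc) V) : Prop :=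
  (∀ s, ORel (c.threads s) (d.threads s)) ∧
  (∀ m, d.mutexes m = c.mutexes m) ∧
  (∀ g, d.globals (Sum.inl g) = c.globals g)

lemma tid_snoc_ne (t : TID) (n : Nat) : t ++ [n] ≠ t := fun h => by
  simpa using congrArg List.length h

lemma applyOne_eq {N2 M2 G2 L2 V2 : Type} [DecidableEq M2] [DecidableEq G2]
    (startF : Nat → N2) (l0 : L2) {d : Config N2 M2 G2 L2 V2} {t : TID}
    {tmpl : Nat} {nd : N2} {l : L2} {cnt : Nat}
    (a : Act M2 G2 L2 V2) (v : N2) (h : d.threads t = some (tmpl, nd, l, cnt)) :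
    applyOne startF l0 d t v a = applyAct startF l0 d t tmpl v l cnt a := by
  simp [applyOne, h]

lemma applyAct_self {N2 M2 G2 L2 V2 : Type} [DecidableEq M2] [DecidableEq G2]
    (startF : Nat → N2) (l0 : L2) (c : Config N2 M2 G2 L2 V2) (t : TID)
    (tmpl : Nat) (v : N2) (l : L2) (cnt : Nat) (a : Act M2 G2 L2 V2) :
    ∃ l' cnt', (applyAct startF l0 c t tmpl v l cnt a).threads t = some (tmpl, v, l', cnt') := by
  have hne : t ++ [cnt] ≠ t := tid_snoc_ne t cnt
  cases a <;>
    simp [applyAct, Function.update_apply, hne]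

lemma ghost_one {d : Config (Node ⊕ (Node × Node)) Mutex (Global ⊕ GGlobal) (L × GLoc) V}
    {t : TID} {b : Act Mutex (Global ⊕ GGlobal) (L × GLoc) V}
    (startF : Nat → Node ⊕ (Node × Node)) (l0 : L × GLoc)
    (hb : GhostStmt b)
    {tmpl : Nat} {nd : Node ⊕ (Node × Node)} {l : L} {gl : GLoc} {cnt : Nat}
    (v : Node ⊕ (Node × Node))
    (h : d.threads t = some (tmpl, nd, (l, gl), cnt)) :
    ∃ gl', (applyOne startF l0 d t v b).threads t = some (tmpl, v, (l, gl'), cnt) ∧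
      (∀ s, s ≠ t → (applyOne startF l0 d t v b).threads s = d.threads s) ∧
      (∀ m, (applyOne startF l0 d t v b).mutexes m = d.mutexes m) ∧
      (∀ g, (applyOne startF l0 d t v b).globals (Sum.inl g) = d.globals (Sum.inl g)) := by
  rw [applyOne_eq startF l0 b v h]
  rcases hb with hb | ⟨p, rfl⟩
  · cases b with
    | localUpd f =>
      refine ⟨(f (l, gl)).2, ?_, ?_, fun m => rfl, fun g => rfl⟩
      · simp only [applyAct, Function.update_self]
        have : f (l, gl) = (l, (f (l, gl)).2) := Prod.ext (hb (l, gl)) rfl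
        rw [this]
      · intro s hs; simp [applyAct, Function.update_of_ne hs]
    | read g f =>
      refine ⟨(f (l, gl) (d.globals g)).2, ?_, ?_, fun m => rfl, fun g => rfl⟩
      · simp only [applyAct, Function.update_self]
        have : f (l, gl) (d.globals g) = (l, (f (l, gl) (d.globals g)).2) :=
          Prod.ext (hb (l, gl) (d.globals g)) rfl
        rw [this]
      · intro s hs; simp [applyAct, Function.update_of_ne hs]
    | write g f =>
      obtain ⟨gg, rfl⟩ := hb
      refine ⟨gl, ?_, ?_, fun m => rfl, fun g' => ?_⟩
      · simp [applyAct]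
      · intro s hs; simp [applyAct, Function.update_of_ne hs]
      · simp [applyAct, Function.update_apply]
    | lock m => exact hb.elim
    | unlock m => exact hb.elim
    | create k => exact hb.elim
    | assert p => exact hb.elim
    | pos c => exact hb.elim
    | neg c => exact hb.elim
  · refine ⟨gl, ?_, ?_, fun m => rfl, fun g => rfl⟩
    · simp [applyAct]
    · intro s hs; simp [applyAct, Function.update_of_ne hs]

lemma ghost_list (startF : Nat → Node ⊕ (Node × Node)) (l0 : L × GLoc) (t : TID)
    (v : Node ⊕ (Node × Node)) :
    ∀ (bs : List (Act Mutex (Global ⊕ GGlobal) (L × GLoc) V))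
      (d : Config (Node ⊕ (Node × Node)) Mutex (Global ⊕ GGlobal) (L × GLoc) V)
      (tmpl : Nat) (l : L) (gl : GLoc) (cnt : Nat),
      (∀ b ∈ bs, GhostStmt b) →
      d.threads t = some (tmpl, v, (l, gl), cnt) →
      ∃ gl',
        (applyList startF l0 d t v bs).threads t = some (tmpl, v, (l, gl'), cnt) ∧
        (∀ s, s ≠ t → (applyList startF l0 d t v bs).threads s = d.threads s) ∧
        (∀ m, (applyList startF l0 d t v bs).mutexes m = d.mutexes m) ∧
        (∀ g, (applyList startF l0 d t v bs).globals (Sum.inl g) = d.globals (Sum.inl g))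
  | [], d, tmpl, l, gl, cnt, _, h => ⟨gl, h, fun _ _ => rfl, fun _ => rfl, fun _ => rfl⟩
  | b :: bs, d, tmpl, l, gl, cnt, hbs, h => by
    obtain ⟨gl1, h1, h2, h3, h4⟩ := ghost_one startF l0 (hbs b (List.mem_cons_self)) v h
    obtain ⟨gl', g1, g2, g3, g4⟩ := ghost_list startF l0 t v bs _ tmpl l gl1 cnt
      (fun b' hb' => hbs b' (List.mem_cons_of_mem b hb')) h1
    exact ⟨gl', g1, fun s hs => (g2 s hs).trans (h2 s hs),
      fun m => (g3 m).trans (h3 m), fun g => (g4 g).trans (h4 g)⟩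

lemma ghost_adm {d : Config (Node ⊕ (Node × Node)) Mutex (Global ⊕ GGlobal) (L × GLoc) V}
    {t : TID} {l : L × GLoc} {cnt : Nat} {b : Act Mutex (Global ⊕ GGlobal) (L × GLoc) V}
    (hb : GhostStmt b) : admissibleAct d t l cnt b := by
  rcases hb with hb | ⟨p, rfl⟩
  · cases b <;> first | exact hb.elim | trivial
  · trivial

lemma ghost_simple {b : Act Mutex (Global ⊕ GGlobal) (L × GLoc) V}
    (hb : GhostStmt b) : b.Simple := by
  rcases hb with hb | ⟨p, rfl⟩
  · cases b <;> first | exact hb.elim | trivial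
  · trivial

lemma apply_comm {P : Prog Node Mutex Global L V} (W : Witness P GGlobal GLoc)
    {c : Config Node Mutex Global L V}
    {d : Config (Node ⊕ (Node × Node)) Mutex (Global ⊕ GGlobal) (L × GLoc) V} {t : TID}
    {tmpl : Nat} {u : Node} {l : L} {cnt : Nat} {gl : GLoc}
    (nd' : Node ⊕ (Node × Node)) (v : Node)
    (hct : c.threads t = some (tmpl, u, l, cnt))
    (hdt : d.threads t = some (tmpl, nd', (l, gl), cnt))
    (hO : ∀ s, s ≠ t → ORel (c.threads s) (d.threads s))
    (hm : ∀ m, d.mutexes m = c.mutexes m)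
    (hg : ∀ g, d.globals (Sum.inl g) = c.globals g)
    (a : Act Mutex Global L V) (hadm : admissibleAct c t l cnt a) :
    admissibleAct d t (l, gl) cnt (liftAct a) ∧
    Rel (applyAct P.start P.initLocal c t tmpl v l cnt a)
        (applyAct (instrument P W).start (instrument P W).initLocal d t tmpl (Sum.inl v)
          (l, gl) cnt (liftAct a)) := by
  have hthreads : ∀ (x : Nat × Node × L × Nat) (gl' : GLoc) (s : TID),
      ORel ((Function.update c.threads t (some x)) s)
        ((Function.update d.threads t (some (x.1, Sum.inl x.2.1, (x.2.2.1, gl'), x.2.2.2))) s) := by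
    intro x gl' s
    by_cases hs : s = t
    · subst hs
      simp only [Function.update_self]
      obtain ⟨x1, x2, x3, x4⟩ := x
      exact ORel_mk
    · simp only [Function.update_of_ne hs]
      exact hO s hs
  cases a with
  | lock m =>
    refine ⟨by simpa [liftAct, admissibleAct, hm m] using hadm, ?_, ?_, ?_⟩
    · exact fun s => hthreads (tmpl, v, l, cnt) gl s
    · intro m'; simp [applyAct, liftAct, Function.update_apply, hm m']
    · intro g; exact hg g
  | unlock m =>
    refine ⟨by simpa [liftAct, admissibleAct, hm m] using hadm, ?_, ?_, ?_⟩
    · exact fun s => hthreads (tmpl, v, l, cnt) gl s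
    · intro m'; simp [applyAct, liftAct, Function.update_apply, hm m']
    · intro g; exact hg g
  | create k =>
    have hne : t ++ [cnt] ≠ t := tid_snoc_ne t cnt
    have hadm' : admissibleAct d t (l, gl) cnt (liftAct (Act.create k)) := by
      have := hO (t ++ [cnt]) hne
      rw [hadm] at this
      simpa [liftAct, admissibleAct] using ORel_none this
    refine ⟨hadm', ?_, fun m => hm m, fun g => hg g⟩
    intro s
    by_cases hs1 : s = t ++ [cnt]
    · subst hs1
      simp only [applyAct, liftAct, instrument, Function.update_self]
      exact ORel_mk
    · simp only [applyAct, liftAct, instrument, Function.update_of_ne hs1]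
      exact hthreads (tmpl, v, l, cnt + 1) gl s
  | localUpd f =>
    exact ⟨trivial, fun s => hthreads (tmpl, v, f l, cnt) gl s, fun m => hm m, fun g => hg g⟩
  | read g f =>
    refine ⟨trivial, ?_, fun m => hm m, fun g' => hg g'⟩
    intro s
    have := hthreads (tmpl, v, f l (c.globals g), cnt) gl s
    simpa [applyAct, liftAct, hg g] using this
  | write g f =>
    refine ⟨trivial, fun s => hthreads (tmpl, v, l, cnt) gl s, fun m => hm m, ?_⟩
    intro g'
    by_cases hgg : g' = g
    · subst hgg; simp [applyAct, liftAct]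
    · have : (Sum.inl g' : Global ⊕ GGlobal) ≠ Sum.inl g := by simpa using hgg
      simp [applyAct, liftAct, Function.update_of_ne hgg, Function.update_of_ne this, hg g']
  | assert p =>
    exact ⟨trivial, fun s => hthreads (tmpl, v, l, cnt) gl s, fun m => hm m, fun g => hg g⟩
  | pos cnd =>
    exact ⟨by simpa [liftAct, admissibleAct] using hadm,
      fun s => hthreads (tmpl, v, l, cnt) gl s, fun m => hm m, fun g => hg g⟩
  | neg cnd =>
    exact ⟨by simpa [liftAct, admissibleAct] using hadm,
      fun s => hthreads (tmpl, v, l, cnt) gl s, fun m => hm m, fun g => hg g⟩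

/-- Main simulation step: an admissible step of `P` can be simulated in `P_W` by an
optional invariant step followed by the instrumented step. -/
lemma sim {P : Prog Node Mutex Global L V} {W : Witness P GGlobal GLoc} (hW : W.WF)
    {c : Config Node Mutex Global L V}
    {d : Config (Node ⊕ (Node × Node)) Mutex (Global ⊕ GGlobal) (L × GLoc) V}
    {t : TID} {u : Node} {a : Act Mutex Global L V} {v : Node}
    {tmpl : Nat} {l : L} {cnt : Nat}
    (hRel : Rel c d)
    (hct : c.threads t = some (tmpl, u, l, cnt))
    (hedge : P.edges tmpl u a v)
    (hadm : admissibleAct c t l cnt a) :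
    ∃ d₁ gl,
      ((W.inv u = none ∧ d₁ = d) ∨
        (∃ bs, W.inv u = some bs ∧
          StepA (instrument P W) d t (Sum.inl u, invAct bs, Sum.inr (u, v)) d₁)) ∧
      d₁.threads t = some (tmpl, srcNode W u v, (l, gl), cnt) ∧
      ∃ d₂, StepA (instrument P W) d₁ t
          (srcNode W u v, deltaAct W tmpl u v a, Sum.inl v) d₂ ∧
        Rel (applyAct P.start P.initLocal c t tmpl v l cnt a) d₂ := by
  obtain ⟨hT, hM, hG⟩ := hRel
  have hTt := hT t
  rw [hct] at hTt
  obtain ⟨gl0, hdt⟩ := ORel_some hTt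
  -- construct the optional invariant step
  have main : ∀ (d₁ : Config (Node ⊕ (Node × Node)) Mutex (Global ⊕ GGlobal) (L × GLoc) V)
      (gl : GLoc),
      d₁.threads t = some (tmpl, srcNode W u v, (l, gl), cnt) →
      (∀ s, s ≠ t → ORel (c.threads s) (d₁.threads s)) →
      (∀ m, d₁.mutexes m = c.mutexes m) →
      (∀ g, d₁.globals (Sum.inl g) = c.globals g) →
      ∃ d₂, StepA (instrument P W) d₁ t
          (srcNode W u v, deltaAct W tmpl u v a, Sum.inl v) d₂ ∧
        Rel (applyAct P.start P.initLocal c t tmpl v l cnt a) d₂ := by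
    intro d₁ gl hd₁t hO1 hm1 hg1
    obtain ⟨hadm', hRel'⟩ := apply_comm W (srcNode W u v) v hct hd₁t hO1 hm1 hg1 a hadm
    set e := applyAct (instrument P W).start (instrument P W).initLocal d₁ t tmpl
      (Sum.inl v) (l, gl) cnt (liftAct a) with he
    have hedges : (instrument P W).edges tmpl (srcNode W u v) (deltaAct W tmpl u v a)
        (Sum.inl v) := Or.inl ⟨u, a, v, hedge, rfl, rfl, rfl⟩
    cases hupd : W.upd tmpl u v with
    | none =>
      refine ⟨e, ⟨tmpl, (l, gl), cnt, hd₁t, hedges, ?_⟩, hRel'⟩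
      simp only [deltaAct, hupd]
      exact ⟨hadm', rfl⟩
    | some us =>
      have hus : ∀ b ∈ us, GhostStmt b := fun b hb => Or.inl (hW.1 tmpl u v us hupd b hb)
      obtain ⟨le, ce, het⟩ := applyAct_self (instrument P W).start (instrument P W).initLocal
        d₁ t tmpl (Sum.inl v) (l, gl) cnt (liftAct a)
      have het' : e.threads t = some (tmpl, Sum.inl v, (le.1, le.2), ce) := by
        rw [← he] at het; simpa using het
      obtain ⟨gl', g1, g2, g3, g4⟩ := ghost_list (instrument P W).start
        (instrument P W).initLocal t (Sum.inl v) us e tmpl le.1 le.2 ce hus het'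
      refine ⟨applyList (instrument P W).start (instrument P W).initLocal e t (Sum.inl v) us,
        ⟨tmpl, (l, gl), cnt, hd₁t, hedges, ?_⟩, ?_, ?_, ?_⟩
      · simp only [deltaAct, hupd]
        exact ⟨hadm', fun b hb => ghost_simple (hus b hb), rfl⟩
      · -- threads
        intro s0
        by_cases hs : s0 = t
        · subst hs
          rw [g1]
          have := hRel'.1 s0
          rw [het'] at this
          cases hcc : (applyAct P.start P.initLocal c s0 tmpl v l cnt a).threads s0 with
          | none => rw [hcc] at this; exact this.elim
          | some q =>
            rw [hcc] at this
            obtain ⟨q1, q2, q3, q4⟩ := q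
            obtain ⟨e1, e2, e3, e4⟩ := this
            exact ⟨e1, e2, e3, e4⟩
        · rw [g2 s0 hs]
          exact hRel'.1 s0
      · intro m; rw [g3 m]; exact hRel'.2.1 m
      · intro g; rw [g4 g]; exact hRel'.2.2 g
  cases hinv : W.inv u with
  | none =>
    have hsrc : srcNode W u v = Sum.inl u := by simp [srcNode, hinv]
    have hd₁t : d.threads t = some (tmpl, srcNode W u v, (l, gl0), cnt) := by
      rw [hsrc]; exact hdt
    obtain ⟨d₂, hs2, hr2⟩ := main d gl0 hd₁t (fun s _ => hT s) hM hG
    exact ⟨d, gl0, Or.inl ⟨rfl, rfl⟩, hd₁t, d₂, hs2, hr2⟩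
  | some bs =>
    have hsrc : srcNode W u v = Sum.inr (u, v) := by simp [srcNode, hinv]
    have hbs : ∀ b ∈ bs, GhostStmt b := hW.2 u bs hinv
    have hiedge : (instrument P W).edges tmpl (Sum.inl u) (invAct bs) (Sum.inr (u, v)) :=
      Or.inr ⟨u, a, v, bs, hedge, hinv, rfl, rfl, rfl⟩
    -- build d₁ and its properties
    have build : ∃ d₁ gl,
        StepA (instrument P W) d t (Sum.inl u, invAct bs, Sum.inr (u, v)) d₁ ∧
        d₁.threads t = some (tmpl, Sum.inr (u, v), (l, gl), cnt) ∧
        (∀ s, s ≠ t → d₁.threads s = d.threads s) ∧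
        (∀ m, d₁.mutexes m = d.mutexes m) ∧
        (∀ g, d₁.globals (Sum.inl g) = d.globals (Sum.inl g)) := by
      cases bs with
      | nil =>
        refine ⟨applyAct (instrument P W).start (instrument P W).initLocal d t tmpl
          (Sum.inr (u, v)) (l, gl0) cnt (Act.localUpd id), gl0,
          ⟨tmpl, (l, gl0), cnt, hdt, hiedge, trivial, by simp, rfl⟩, ?_, ?_, fun m => rfl,
          fun g => rfl⟩
        · simp [applyAct]
        · intro s hs; simp [applyAct, Function.update_of_ne hs]
      | cons b tail =>
        have hb : GhostStmt b := hbs b (List.mem_cons_self)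
        have htail : ∀ b' ∈ tail, GhostStmt b' := fun b' h' =>
          hbs b' (List.mem_cons_of_mem b h')
        have heq : applyAct (instrument P W).start (instrument P W).initLocal d t tmpl
            (Sum.inr (u, v)) (l, gl0) cnt b
            = applyOne (instrument P W).start (instrument P W).initLocal d t
              (Sum.inr (u, v)) b :=
          (applyOne_eq (instrument P W).start (instrument P W).initLocal b
            (Sum.inr (u, v)) hdt).symm
        obtain ⟨gl1, h1, h2, h3, h4⟩ := ghost_one (instrument P W).start
          (instrument P W).initLocal hb (Sum.inr (u, v)) hdt
        obtain ⟨gl', g1, g2, g3, g4⟩ := ghost_list (instrument P W).start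
          (instrument P W).initLocal t (Sum.inr (u, v)) tail _ tmpl l gl1 cnt htail h1
        refine ⟨applyList (instrument P W).start (instrument P W).initLocal
            (applyOne (instrument P W).start (instrument P W).initLocal d t
              (Sum.inr (u, v)) b) t (Sum.inr (u, v)) tail, gl',
          ⟨tmpl, (l, gl0), cnt, hdt, hiedge, ghost_adm hb,
            fun b' h' => ghost_simple (htail b' h'), ?_⟩, g1,
          fun s hs => (g2 s hs).trans (h2 s hs),
          fun m => (g3 m).trans (h3 m),
          fun g => (g4 g).trans (h4 g)⟩
        rw [heq]
    obtain ⟨d₁, gl, hstep1, hd1t, hpres, hpm, hpg⟩ := build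
    have hd₁t : d₁.threads t = some (tmpl, srcNode W u v, (l, gl), cnt) := by
      rw [hsrc]; exact hd1t
    obtain ⟨d₂, hs2, hr2⟩ := main d₁ gl hd₁t
      (fun s hs => by rw [hpres s hs]; exact hT s)
      (fun m => (hpm m).trans (hM m))
      (fun g => (hpg g).trans (hG g))
    exact ⟨d₁, gl, Or.inr ⟨bs, rfl, hstep1⟩, hd₁t, d₂, hs2, hr2⟩

/-- The trivial run of length 0 starting in the canonical initial configuration. -/
def initRun (Q : ProgA Node Mutex Global L V) : InterleavingA Q where
  len := 0
  states := fun _ =>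
    { threads := fun t => if t = ([] : TID) then some (0, Q.start 0, Q.initLocal, 0) else none,
      mutexes := fun _ => none, globals := Q.initGlobal }
  who := Fin.elim0
  edge := Fin.elim0
  init := ⟨fun _ => rfl, fun _ => rfl, fun _ => rfl⟩
  consistent := fun k => k.elim0

/-- Extend a run by one step at the end. -/
def snocRun {Q : ProgA Node Mutex Global L V} (j : InterleavingA Q) (t : TID)
    (e : Node × ActA Mutex Global L V × Node) (c' : Config Node Mutex Global L V)
    (h : StepA Q (j.states (Fin.last j.len)) t e c') : InterleavingA Q where
  len := j.len + 1
  states := Fin.snoc j.states c'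
  who := Fin.snoc j.who t
  edge := Fin.snoc j.edge e
  init := by
    have h0 : (0 : Fin (j.len + 1 + 1)) = Fin.castSucc 0 := rfl
    rw [h0, Fin.snoc_castSucc]
    exact j.init
  consistent := by
    refine Fin.lastCases ?_ ?_
    · simp only [Fin.succ_last, Fin.snoc_castSucc, Fin.snoc_last]
      exact h
    · intro i
      simp only [Fin.snoc_castSucc, Fin.succ_castSucc]
      exact j.consistent i

lemma snocRun_states {Q : ProgA Node Mutex Global L V} (j : InterleavingA Q) (t : TID)
    (e : Node × ActA Mutex Global L V × Node) (c' : Config Node Mutex Global L V)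
    (h : StepA Q (j.states (Fin.last j.len)) t e c') :
    (snocRun j t e c' h).states = Fin.snoc j.states c' := rfl

lemma snocRun_who {Q : ProgA Node Mutex Global L V} (j : InterleavingA Q) (t : TID)
    (e : Node × ActA Mutex Global L V × Node) (c' : Config Node Mutex Global L V)
    (h : StepA Q (j.states (Fin.last j.len)) t e c') :
    (snocRun j t e c' h).who = Fin.snoc j.who t := rfl

lemma snocRun_edge {Q : ProgA Node Mutex Global L V} (j : InterleavingA Q) (t : TID)
    (e : Node × ActA Mutex Global L V × Node) (c' : Config Node Mutex Global L V)
    (h : StepA Q (j.states (Fin.last j.len)) t e c') :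
    (snocRun j t e c' h).edge = Fin.snoc j.edge e := rfl

lemma snocRun_last {Q : ProgA Node Mutex Global L V} (j : InterleavingA Q) (t : TID)
    (e : Node × ActA Mutex Global L V × Node) (c' : Config Node Mutex Global L V)
    (h : StepA Q (j.states (Fin.last j.len)) t e c') :
    (snocRun j t e c' h).states (Fin.last (snocRun j t e c' h).len) = c' := by
  rw [snocRun_states]
  exact Fin.snoc_last _ _

lemma extendRun {Q : ProgA Node Mutex Global L V} (j : InterleavingA Q)
    {d₁ d₂ : Config Node Mutex Global L V} {t : TID}
    {e : Node × ActA Mutex Global L V × Node}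
    (hlast : j.states (Fin.last j.len) = d₁) (h : StepA Q d₁ t e d₂) :
    ∃ j' : InterleavingA Q, j'.states (Fin.last j'.len) = d₂ :=
  ⟨snocRun j t e d₂ (by rw [hlast]; exact h), snocRun_last _ _ _ _ _⟩

/-- Reachability: along an interleaving of `P`, some run of `P_W` tracks the state. -/
lemma reach {P : Prog Node Mutex Global L V} {W : Witness P GGlobal GLoc} (hW : W.WF)
    (i : Interleaving P) :
    ∀ n (hn : n ≤ i.len), ∃ j : InterleavingA (instrument P W),
      Rel (i.states ⟨n, Nat.lt_succ_of_le hn⟩) (j.states (Fin.last j.len)) := by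
  intro n
  induction n with
  | zero =>
    intro hn
    have h0 : (⟨0, Nat.lt_succ_of_le hn⟩ : Fin (i.len + 1)) = 0 := Fin.ext (by simp)
    rw [h0]
    refine ⟨initRun (instrument P W), fun s => ?_, fun m => ?_, fun g => ?_⟩
    · rw [i.init.1 s]
      by_cases hs : s = ([] : TID)
      · simp only [initRun, instrument, if_pos hs]
        exact ORel_mk
      · simp only [initRun, if_neg hs]
        trivial
    · exact (i.init.2.1 m).symm
    · exact (i.init.2.2 g).symm
  | succ n ih =>
    intro hn
    obtain ⟨j, hj⟩ := ih (Nat.le_of_succ_le hn)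
    have hn' : n < i.len := hn
    obtain ⟨tmpl, l, cnt, hct, hedge, hadm, hc'⟩ := i.consistent ⟨n, hn'⟩
    have hrel : Rel (i.states (Fin.castSucc ⟨n, hn'⟩)) (j.states (Fin.last j.len)) := hj
    obtain ⟨d₁, gl, hfirst, hd₁t, d₂, hstep₂, hRel₂⟩ :=
      sim hW hrel hct hedge hadm
    have hgoal : Rel (i.states ⟨n + 1, Nat.lt_succ_of_le hn⟩) d₂ := by
      rw [show (⟨n + 1, Nat.lt_succ_of_le hn⟩ : Fin (i.len + 1)) = Fin.succ ⟨n, hn'⟩ from rfl,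
        hc']
      exact hRel₂
    rcases hfirst with ⟨_, rfl⟩ | ⟨bs, hinv, hstep₁⟩
    · obtain ⟨j', hj'⟩ := extendRun j rfl hstep₂
      exact ⟨j', by rw [hj']; exact hgoal⟩
    · obtain ⟨j₁, hj₁⟩ := extendRun j rfl hstep₁
      obtain ⟨j', hj'⟩ := extendRun j₁ hj₁ hstep₂
      exact ⟨j', by rw [hj']; exact hgoal⟩

/-- Finish: append the violating instrumented step to a run ending in `d₁`. -/
lemma finishRun {P : Prog Node Mutex Global L V} {W : Witness P GGlobal GLoc}
    (j : InterleavingA (instrument P W))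
    {d₁ d₂ : Config (Node ⊕ (Node × Node)) Mutex (Global ⊕ GGlobal) (L × GLoc) V}
    {t : TID} {tmpl : Nat} {u v : Node} {p : L → Bool} {gl : GLoc} {l : L} {cnt : Nat}
    (hlast : j.states (Fin.last j.len) = d₁)
    (hd₁t : d₁.threads t = some (tmpl, srcNode W u v, (l, gl), cnt))
    (hstep₂ : StepA (instrument P W) d₁ t
      (srcNode W u v, deltaAct W tmpl u v (Act.assert p), Sum.inl v) d₂)
    (hfalse : p l = false) :
    ∃ (i' : InterleavingA (instrument P W)) (k' : Fin i'.len),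
      i'.who k' = t ∧
      i'.edge k' = (srcNode W u v, deltaAct W tmpl u v (Act.assert p), Sum.inl v) ∧
      i'.ViolatesAt k' := by
  subst hlast
  have hwho : (snocRun j t _ d₂ hstep₂).who (Fin.last j.len) = t := by
    rw [snocRun_who]
    exact Fin.snoc_last _ _
  have hE : (snocRun j t _ d₂ hstep₂).edge (Fin.last j.len)
      = (srcNode W u v, deltaAct W tmpl u v (Act.assert p), Sum.inl v) := by
    rw [snocRun_edge]
    exact Fin.snoc_last _ _
  have hS : (snocRun j t _ d₂ hstep₂).states (Fin.castSucc (Fin.last j.len))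
      = j.states (Fin.last j.len) := by
    rw [snocRun_states]
    exact Fin.snoc_castSucc _ _ _
  refine ⟨snocRun j t _ d₂ hstep₂, Fin.last j.len, hwho, hE, ?_⟩
  unfold InterleavingA.ViolatesAt
  rw [hwho, hE, hS]
  refine ⟨tmpl, (l, gl), cnt, hd₁t, ?_⟩
  cases hupd : W.upd tmpl u v with
  | none =>
    simp only [deltaAct, hupd, liftAct]
    exact ⟨fun q => p q.1, rfl, hfalse⟩
  | some us =>
    simp only [deltaAct, hupd, liftAct]
    exact Or.inl ⟨fun q => p q.1, rfl, hfalse⟩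

end Aux

/-- Violation preservation: if an interleaving of `P` violates an
assertion at an edge `(u, assert p, v)` taken by thread `t`, then some interleaving of the
witness-instrumented program `P_W` violates the same assertion at the edge
`δ_W (u, assert p, v)` taken by `t`. Consequently, if the ghost witness `W` is valid
(`P_W` is safe w.r.t. interleaving semantics), then `P` is safe. -/
theorem violation_preservation
    (P : Prog Node Mutex Global L V) (W : Witness P GGlobal GLoc) (hW : W.WF) :
    (∀ (i : Interleaving P) (k : Fin i.len) (p : L → Bool) (u v : Node),
      i.edge k = (u, Act.assert p, v) →
      i.ViolatesAt k →
      ∃ (i' : InterleavingA (instrument P W)) (k' : Fin i'.len) (tmpl : Nat),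
        i'.who k' = i.who k ∧
        i'.edge k' = (srcNode W u v, deltaAct W tmpl u v (Act.assert p), Sum.inl v) ∧
        i'.ViolatesAt k') ∧
    (SafeA (instrument P W) → Safe P) := by
  have part1 : ∀ (i : Interleaving P) (k : Fin i.len) (p : L → Bool) (u v : Node),
      i.edge k = (u, Act.assert p, v) →
      i.ViolatesAt k →
      ∃ (i' : InterleavingA (instrument P W)) (k' : Fin i'.len) (tmpl : Nat),
        i'.who k' = i.who k ∧
        i'.edge k' = (srcNode W u v, deltaAct W tmpl u v (Act.assert p), Sum.inl v) ∧
        i'.ViolatesAt k' := by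
    intro i k p u v hedgeq hviol
    obtain ⟨j, hj⟩ := reach hW i k.val (Nat.le_of_lt k.isLt)
    have hcast : (⟨k.val, Nat.lt_succ_of_le (Nat.le_of_lt k.isLt)⟩ : Fin (i.len + 1))
        = Fin.castSucc k := rfl
    rw [hcast] at hj
    obtain ⟨tmpl, l, cnt, hct, hedge, hadm, _⟩ := i.consistent k
    simp only [hedgeq] at hct hedge
    have hct2 := hct
    have hviol2 := hviol
    obtain ⟨p', u', v', heq', tmplv, lv, cntv, hthr, hfalse⟩ := hviol2
    rw [hedgeq] at heq'
    simp only [Prod.mk.injEq, Act.assert.injEq] at heq'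
    obtain ⟨rfl, hpp, rfl⟩ := heq'
    rw [hthr] at hct2
    simp only [Option.some.injEq, Prod.mk.injEq] at hct2
    have hfalse' : p l = false := by
      rw [hpp, ← hct2.2.2.1]
      exact hfalse
    obtain ⟨d₁, gl, hfirst, hd₁t, d₂, hstep₂, _⟩ := sim hW hj hct hedge (by trivial)
    rcases hfirst with ⟨_, rfl⟩ | ⟨bs, hinv, hstep₁⟩
    · obtain ⟨i', k', h1, h2, h3⟩ := finishRun j rfl hd₁t hstep₂ hfalse'
      exact ⟨i', k', tmpl, h1, h2, h3⟩
    · obtain ⟨i', k', h1, h2, h3⟩ :=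
        finishRun (snocRun j _ _ d₁ hstep₁) (snocRun_last _ _ _ _ _) hd₁t hstep₂ hfalse'
      exact ⟨i', k', tmpl, h1, h2, h3⟩
  refine ⟨part1, ?_⟩
  intro hsafe i k hviol
  have hviol2 := hviol
  obtain ⟨p, u, v, hedgeq, _⟩ := hviol2
  obtain ⟨i', k', tmpl, _, _, hv'⟩ := part1 i k p u v hedgeq hviol
  exact hsafe i' k' hv'
end CW
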